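/- Let r be a positive integer, let G be a finite simple graph with no isolated vertices, and let H be the (nonempty) induced subgraph of G obtained by deleting the vertices of an r-net of G. Then λ_1(H)^{2r} ≤ λ_1(G)^{2r} − 1, where λ_1 denotes the largest eigenvalue of the adjacency matrix. -/

import Mathlib

open Matrix

attribute [local instance] Classical.propDecidable

/-- The adjacency matrix of a finite simple graph, with real entries. -/
noncomputable def adjMat {V : Type*} [Fintype V] (G : SimpleGraph V) : Matrix V V ℝ :=
  Matrix.of fun a b => if G.Adj a b then 1 else 0

lemma adjMat_isHermitian {V : Type*} [Fintype V] (G : SimpleGraph V) :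
    (adjMat G).IsHermitian := by
  show (adjMat G)ᴴ = adjMat G
  ext i j
  simp only [adjMat, Matrix.conjTranspose_apply, Matrix.of_apply, star_trivial]
  rw [SimpleGraph.adj_comm]

/-- The `k`-th largest eigenvalue (`1`-indexed, counted with multiplicity) of the
adjacency matrix of a finite simple graph. -/
noncomputable def graphEigNth {V : Type*} [Fintype V] (G : SimpleGraph V) (k : ℕ) : ℝ :=
  ((Finset.univ.val.map (adjMat_isHermitian G).eigenvalues).sort (· ≤ ·)).getD
    (Fintype.card V - k) 0

/-! ### Auxiliary lemmas -/

section Aux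

variable {V : Type*} [Fintype V]

lemma dot_expand (M : Matrix V V ℝ) (x : V → ℝ) :
    x ⬝ᵥ (M *ᵥ x) = ∑ i, ∑ j, M i j * (x i * x j) := by
  simp only [dotProduct, mulVec, Finset.mul_sum]
  exact Finset.sum_congr rfl fun i _ => Finset.sum_congr rfl fun j _ => by ring

lemma abs_dot_le (M : Matrix V V ℝ) (hM : ∀ i j, 0 ≤ M i j) (v : V → ℝ) :
    |v ⬝ᵥ (M *ᵥ v)| ≤ (fun i => |v i|) ⬝ᵥ (M *ᵥ fun i => |v i|) := by
  rw [dot_expand, dot_expand]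
  calc |∑ i, ∑ j, M i j * (v i * v j)| ≤ ∑ i, |∑ j, M i j * (v i * v j)| :=
        Finset.abs_sum_le_sum_abs _ _
    _ ≤ ∑ i, ∑ j, |M i j * (v i * v j)| := by
        gcongr with i _
        exact Finset.abs_sum_le_sum_abs _ _
    _ = ∑ i, ∑ j, M i j * (|v i| * |v j|) := by
        refine Finset.sum_congr rfl fun i _ => Finset.sum_congr rfl fun j _ => ?_
        rw [abs_mul, abs_mul, abs_of_nonneg (hM i j)]

lemma dot_self_pos {v : V → ℝ} (hv : v ≠ 0) : 0 < v ⬝ᵥ v := by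
  obtain ⟨i, hi⟩ : ∃ i, v i ≠ 0 := by
    by_contra h; push_neg at h; exact hv (funext h)
  rw [dotProduct]
  exact Finset.sum_pos' (fun j _ => mul_self_nonneg _)
    ⟨i, Finset.mem_univ i, mul_self_pos.mpr hi⟩

lemma mulVec_pow_eig [DecidableEq V] (A : Matrix V V ℝ) (μ : ℝ) (v : V → ℝ)
    (h : A *ᵥ v = μ • v) (m : ℕ) : (A ^ m) *ᵥ v = (μ ^ m) • v := by
  induction m with
  | zero => simp
  | succ m ih =>
    rw [pow_succ, ← Matrix.mulVec_mulVec, h, Matrix.mulVec_smul, ih, smul_smul, pow_succ]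
    ring_nf

lemma pow_entry_nonneg [DecidableEq V] {M : Matrix V V ℝ} (h : ∀ i j, 0 ≤ M i j) (m : ℕ) :
    ∀ i j, 0 ≤ (M ^ m) i j := by
  induction m with
  | zero =>
    intro i j
    by_cases hij : i = j <;> simp [Matrix.one_apply, hij]
  | succ m ih =>
    intro i j
    rw [pow_succ, Matrix.mul_apply]
    exact Finset.sum_nonneg fun k _ => mul_nonneg (ih i k) (h k j)

lemma rayleigh_pow_le [DecidableEq V] {A : Matrix V V ℝ} (hA : A.IsHermitian)
    (x : V → ℝ) (m : ℕ) {C : ℝ} (hC : ∀ i, hA.eigenvalues i ^ m ≤ C) :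
    x ⬝ᵥ ((A ^ m) *ᵥ x) ≤ C * (x ⬝ᵥ x) := by
  set U : Matrix V V ℝ := (hA.eigenvectorUnitary : Matrix V V ℝ) with hU
  set D : Matrix V V ℝ := Matrix.diagonal hA.eigenvalues with hD
  have hU1 : star U * U = 1 := Matrix.mem_unitaryGroup_iff'.mp hA.eigenvectorUnitary.2
  have hU2 : U * star U = 1 := Matrix.mem_unitaryGroup_iff.mp hA.eigenvectorUnitary.2
  have hspec : A = U * D * star U := by
    have := hA.spectral_theorem
    simpa [RCLike.ofReal_real_eq_id, Function.comp] using this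
  have hpow : ∀ k, A ^ k = U * D ^ k * star U := by
    intro k
    induction k with
    | zero => rw [pow_zero, pow_zero, Matrix.mul_one, hU2]
    | succ k ih =>
      rw [pow_succ, ih, hspec, pow_succ]
      simp only [Matrix.mul_assoc]
      rw [← Matrix.mul_assoc (star U) U, hU1, Matrix.one_mul]
  have hsU : ∀ z : V → ℝ, star U *ᵥ z = z ᵥ* U := by
    intro z
    rw [Matrix.star_eq_conjTranspose, Matrix.mulVec_conjTranspose]
    simp
  have hxy : x ⬝ᵥ ((A ^ m) *ᵥ x) = (x ᵥ* U) ⬝ᵥ ((D ^ m) *ᵥ (x ᵥ* U)) := by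
    rw [hpow m, ← Matrix.mulVec_mulVec, ← Matrix.mulVec_mulVec, Matrix.dotProduct_mulVec,
      hsU]
  have hyy : (x ᵥ* U) ⬝ᵥ (x ᵥ* U) = x ⬝ᵥ x := by
    rw [← Matrix.dotProduct_mulVec, ← hsU x, Matrix.mulVec_mulVec, hU2, Matrix.one_mulVec]
  rw [hxy, ← hyy]
  have hDpow : D ^ m = Matrix.diagonal (fun i => hA.eigenvalues i ^ m) := by
    rw [hD, Matrix.diagonal_pow]
    rfl
  rw [hDpow]
  have hdiag : ∀ i, (Matrix.diagonal (fun i => hA.eigenvalues i ^ m) *ᵥ (x ᵥ* U)) i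
      = hA.eigenvalues i ^ m * (x ᵥ* U) i := fun i => Matrix.mulVec_diagonal _ _ _
  calc (x ᵥ* U) ⬝ᵥ (Matrix.diagonal (fun i => hA.eigenvalues i ^ m) *ᵥ (x ᵥ* U))
      = ∑ i, hA.eigenvalues i ^ m * ((x ᵥ* U) i * (x ᵥ* U) i) := by
        simp only [dotProduct, hdiag]
        exact Finset.sum_congr rfl fun i _ => by ring
    _ ≤ ∑ i, C * ((x ᵥ* U) i * (x ᵥ* U) i) := by
        refine Finset.sum_le_sum fun i _ => ?_
        exact mul_le_mul_of_nonneg_right (hC i) (mul_self_nonneg _)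
    _ = C * ((x ᵥ* U) ⬝ᵥ (x ᵥ* U)) := by rw [dotProduct, Finset.mul_sum]

lemma eig_max_spec [Nonempty V] (G : SimpleGraph V) :
    (∃ i, (adjMat_isHermitian G).eigenvalues i = graphEigNth G 1) ∧
      ∀ i, (adjMat_isHermitian G).eigenvalues i ≤ graphEigNth G 1 := by
  classical
  set l := (Finset.univ.val.map (adjMat_isHermitian G).eigenvalues).sort (· ≤ ·) with hl
  have hlen : l.length = Fintype.card V := by
    rw [hl, Multiset.length_sort, Multiset.card_map]
    rfl
  have hpos : 0 < Fintype.card V := Fintype.card_pos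
  have hk : Fintype.card V - 1 < l.length := by omega
  have hval : graphEigNth G 1 = l[Fintype.card V - 1] := by
    rw [graphEigNth, ← hl, List.getD_eq_getElem l 0 hk]
  have hsorted : l.Pairwise (· ≤ ·) := Multiset.pairwise_sort _ _
  constructor
  · have hmem : l[Fintype.card V - 1] ∈ l := List.getElem_mem _
    obtain ⟨i, _, hi⟩ := Multiset.mem_map.mp ((Multiset.mem_sort _).mp hmem)
    exact ⟨i, by rw [hval]; exact hi⟩
  · intro i
    have hmem : (adjMat_isHermitian G).eigenvalues i ∈ l :=
      (Multiset.mem_sort _).mpr (Multiset.mem_map.mpr ⟨i, Finset.mem_univ_val i, rfl⟩)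
    obtain ⟨j, hj, hji⟩ := List.mem_iff_getElem.mp hmem
    rw [← hji, hval]
    have := hsorted.rel_get_of_le (a := ⟨j, hj⟩) (b := ⟨Fintype.card V - 1, hk⟩)
      (by simp only [Fin.mk_le_mk]; omega)
    simpa using this

lemma sum_eq_sum_subtype (s : Set V) [Fintype s] (F : V → ℝ)
    (h0 : ∀ a, a ∉ s → F a = 0) : ∑ a, F a = ∑ w : s, F ↑w := by
  classical
  calc ∑ a, F a = ∑ a ∈ s.toFinset, F a :=
        (Finset.sum_subset (Finset.subset_univ _) fun a _ ha =>
          h0 a (by simpa [Set.mem_toFinset] using ha)).symm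
    _ = ∑ w : s, F ↑w := (Finset.sum_set_coe _).symm

end Aux

/-- A walk of length `2*m` obtained by bouncing back and forth along an edge. -/
def padWalk {V : Type*} {G : SimpleGraph V} {v w : V} (h : G.Adj v w) : ℕ → G.Walk v v
  | 0 => SimpleGraph.Walk.nil
  | (m + 1) => SimpleGraph.Walk.cons h (SimpleGraph.Walk.cons h.symm (padWalk h m))

lemma padWalk_length {V : Type*} {G : SimpleGraph V} {v w : V} (h : G.Adj v w) (m : ℕ) :
    (padWalk h m).length = 2 * m := by
  induction m with
  | zero => rfl
  | succ m ih =>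
    simp only [padWalk, SimpleGraph.Walk.length_cons, ih]
    omega

theorem net_removal_reduces_spectral_radius (r n : ℕ) (hr : 1 ≤ r)
    (G : SimpleGraph (Fin n))
    (hnoiso : ∀ v : Fin n, ∃ w, G.Adj v w)
    (S : Finset (Fin n))
    (hnet : ∀ v : Fin n, ∃ u ∈ S, ∃ p : G.Walk u v, p.length ≤ r)
    (hne : ∃ v : Fin n, v ∉ S) :
    graphEigNth (G.induce {v : Fin n | v ∉ S}) 1 ^ (2 * r) ≤
      graphEigNth G 1 ^ (2 * r) - 1 := by
  classical
  obtain ⟨v₀, hv₀⟩ := hne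
  set W : Set (Fin n) := {v : Fin n | v ∉ S} with hW
  haveI : Nonempty ↥W := ⟨⟨v₀, hv₀⟩⟩
  haveI : Nonempty (Fin n) := ⟨v₀⟩
  set H : SimpleGraph ↥W := G.induce W with hH
  set A : Matrix (Fin n) (Fin n) ℝ := adjMat G with hA
  set B : Matrix ↥W ↥W ℝ := adjMat H with hB
  have hAh := adjMat_isHermitian G
  have hBh := adjMat_isHermitian H
  set lamG : ℝ := graphEigNth G 1 with hlamG
  set lamH : ℝ := graphEigNth H 1 with hlamH
  obtain ⟨⟨i0, hi0⟩, hmaxH⟩ := eig_max_spec H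
  obtain ⟨_, hmaxG⟩ := eig_max_spec G
  -- entrywise nonnegativity
  have hA0 : ∀ i j, 0 ≤ A i j := by
    intro i j
    simp only [hA, adjMat, Matrix.of_apply]
    split <;> norm_num
  have hB0 : ∀ i j, 0 ≤ B i j := by
    intro i j
    simp only [hB, adjMat, Matrix.of_apply]
    split <;> norm_num
  -- the eigenvector for the top eigenvalue of H
  set v : ↥W → ℝ := ⇑(hBh.eigenvectorBasis i0) with hv
  have hvec : B *ᵥ v = lamH • v := by
    rw [hlamH, ← hi0]
    exact hBh.mulVec_eigenvectorBasis i0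
  have hvne : v ≠ 0 := by
    intro h
    exact hBh.eigenvectorBasis.toBasis.ne_zero i0 (by ext w; exact congrFun h w)
  set t : ℝ := v ⬝ᵥ v with ht
  have htpos : 0 < t := dot_self_pos hvne
  -- Step 1
  have h1 : lamH ^ (2 * r) * t = v ⬝ᵥ ((B ^ (2 * r)) *ᵥ v) := by
    rw [mulVec_pow_eig B lamH v hvec (2 * r), dotProduct_smul, smul_eq_mul, ht]
  -- Step 2
  have h2 : v ⬝ᵥ ((B ^ (2 * r)) *ᵥ v) ≤
      (fun w => |v w|) ⬝ᵥ ((B ^ (2 * r)) *ᵥ fun w => |v w|) :=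
    le_trans (le_abs_self _) (abs_dot_le _ (pow_entry_nonneg hB0 _) v)
  -- adjacency matrices as mathlib adjacency matrices
  have hAeq : A = G.adjMatrix ℝ := by
    ext i j
    by_cases h : G.Adj i j <;> simp [hA, adjMat, h]
  have hBeq : B = H.adjMatrix ℝ := by
    ext i j
    by_cases h : H.Adj i j <;> simp [hB, adjMat, h]
  -- the embedding of H into G
  set ι : H →g G := (SimpleGraph.Embedding.induce W (G := G)).toHom with hι
  have hιinj : Function.Injective ι := Subtype.val_injective
  -- Key combinatorial inequality
  have hkey : ∀ w w' : ↥W,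
      (B ^ (2 * r)) w w' + (if w = w' then (1 : ℝ) else 0) ≤ (A ^ (2 * r)) ↑w ↑w' := by
    intro w w'
    rw [hAeq, hBeq, SimpleGraph.adjMatrix_pow_apply_eq_card_walk,
      SimpleGraph.adjMatrix_pow_apply_eq_card_walk]
    let f : {p : H.Walk w w' | p.length = 2 * r} → {p : G.Walk ↑w ↑w' | p.length = 2 * r} :=
      fun p => ⟨p.1.map ι, by
        have := p.2
        simp only [Set.mem_setOf_eq] at this
        exact (SimpleGraph.Walk.length_map _ _).trans this⟩
    have hf : Function.Injective f := by
      intro p q hpq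
      apply Subtype.ext
      have hval : SimpleGraph.Walk.map ι p.1 = SimpleGraph.Walk.map ι q.1 :=
        congrArg Subtype.val hpq
      exact SimpleGraph.Walk.map_injective_of_injective hιinj w w' hval
    by_cases hww : w = w'
    · subst hww
      simp only [if_pos rfl]
      obtain ⟨u, huS, p, hpl⟩ := hnet ↑w
      obtain ⟨w₂, hadj⟩ := hnoiso ↑w
      set q₀ : G.Walk ↑w ↑w := (padWalk hadj (r - p.length)).append (p.reverse.append p)
        with hq₀
      have hq₀len : q₀.length = 2 * r := by
        rw [hq₀, SimpleGraph.Walk.length_append, SimpleGraph.Walk.length_append,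
          SimpleGraph.Walk.length_reverse, padWalk_length]
        omega
      have hu_mem : u ∈ q₀.support := by
        rw [hq₀, SimpleGraph.Walk.mem_support_append_iff]
        right
        rw [SimpleGraph.Walk.mem_support_append_iff]
        left
        exact p.reverse.end_mem_support
      have hlt : Fintype.card {p : H.Walk w w | p.length = 2 * r} <
          Fintype.card {p : G.Walk ↑w ↑w | p.length = 2 * r} := by
        refine Fintype.card_lt_of_injective_of_notMem f hf (b := ⟨q₀, hq₀len⟩) ?_
        rintro ⟨⟨q, hq⟩, hqe⟩
        have hmem : u ∈ (q.map ι).support := by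
          rw [show SimpleGraph.Walk.map ι q = q₀ from congrArg Subtype.val hqe]
          exact hu_mem
        rw [SimpleGraph.Walk.support_map] at hmem
        obtain ⟨xw, _, hxw⟩ := List.mem_map.mp hmem
        refine xw.2 ?_
        have hxw' : (↑xw : Fin n) = u := hxw
        rw [hxw']
        exact huS
      have hle : Fintype.card {p : H.Walk w w | p.length = 2 * r} + 1 ≤
          Fintype.card {p : G.Walk ↑w ↑w | p.length = 2 * r} := hlt
      exact_mod_cast hle
    · simp only [if_neg hww, add_zero]
      exact_mod_cast Fintype.card_le_of_injective f hf
  -- the extension of |v| by zero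
  set x : Fin n → ℝ := fun a => if h : a ∈ W then |v ⟨a, h⟩| else 0 with hx
  have hxcoe : ∀ w : ↥W, x ↑w = |v w| := by
    intro w
    simp only [hx, dif_pos w.2]
  have hxzero : ∀ a : Fin n, a ∉ W → x a = 0 := by
    intro a ha
    simp only [hx, dif_neg ha]
  have hsum_ext : ∀ g : Matrix (Fin n) (Fin n) ℝ,
      (∑ a, ∑ b, g a b * (x a * x b)) = ∑ w : ↥W, ∑ w' : ↥W, g ↑w ↑w' * (|v w| * |v w'|) := by
    intro g
    rw [sum_eq_sum_subtype W (fun a => ∑ b, g a b * (x a * x b))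
      (fun a ha => Finset.sum_eq_zero fun b _ => by simp [hxzero a ha])]
    refine Finset.sum_congr rfl fun w _ => ?_
    rw [sum_eq_sum_subtype W (fun b => g ↑w b * (x ↑w * x b))
      (fun b hb => by simp [hxzero b hb])]
    refine Finset.sum_congr rfl fun w' _ => ?_
    simp only [hxcoe]
  -- Step 3 : diagonal gain
  have h3 : (fun w => |v w|) ⬝ᵥ ((B ^ (2 * r)) *ᵥ fun w => |v w|) + t ≤
      x ⬝ᵥ ((A ^ (2 * r)) *ᵥ x) := by
    rw [dot_expand, dot_expand, hsum_ext (A ^ (2 * r))]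
    have hterm : ∀ w w' : ↥W,
        (B ^ (2 * r)) w w' * (|v w| * |v w'|)
          + (if w = w' then (1 : ℝ) else 0) * (|v w| * |v w'|)
          ≤ (A ^ (2 * r)) ↑w ↑w' * (|v w| * |v w'|) := by
      intro w w'
      rw [← add_mul]
      exact mul_le_mul_of_nonneg_right (hkey w w')
        (mul_nonneg (abs_nonneg _) (abs_nonneg _))
    have hdelta : (∑ w : ↥W, ∑ w' : ↥W,
        (if w = w' then (1 : ℝ) else 0) * (|v w| * |v w'|)) = t := by
      have : ∀ w : ↥W, (∑ w' : ↥W, (if w = w' then (1 : ℝ) else 0) * (|v w| * |v w'|))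
          = v w * v w := by
        intro w
        rw [Finset.sum_eq_single w]
        · simp [abs_mul_abs_self]
        · intro b _ hb
          rw [if_neg (Ne.symm hb), zero_mul]
        · intro h
          exact absurd (Finset.mem_univ w) h
      rw [Finset.sum_congr rfl fun w _ => this w]
      rw [ht, dotProduct]
    calc (∑ w : ↥W, ∑ w' : ↥W, (B ^ (2 * r)) w w' * (|v w| * |v w'|)) + t
        = ∑ w : ↥W, ∑ w' : ↥W, ((B ^ (2 * r)) w w' * (|v w| * |v w'|)
            + (if w = w' then (1 : ℝ) else 0) * (|v w| * |v w'|)) := by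
          rw [← hdelta]
          rw [← Finset.sum_add_distrib]
          refine Finset.sum_congr rfl fun w _ => ?_
          rw [← Finset.sum_add_distrib]
      _ ≤ ∑ w : ↥W, ∑ w' : ↥W, (A ^ (2 * r)) ↑w ↑w' * (|v w| * |v w'|) := by
          refine Finset.sum_le_sum fun w _ => Finset.sum_le_sum fun w' _ => hterm w w'
  -- Step 4 : Rayleigh for G
  have hG0 : 0 ≤ lamG := by
    have hray := rayleigh_pow_le hAh (Pi.single v₀ 1) 1
      (C := lamG) (fun i => by rw [pow_one]; exact hmaxG i)
    have hL : (Pi.single v₀ 1 : Fin n → ℝ) ⬝ᵥ ((A ^ 1) *ᵥ Pi.single v₀ 1) = 0 := by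
      rw [pow_one]
      simp [Matrix.mulVec_single, hA, adjMat, single_dotProduct]
    have hR : (Pi.single v₀ 1 : Fin n → ℝ) ⬝ᵥ (Pi.single v₀ 1 : Fin n → ℝ) = 1 := by
      simp [single_dotProduct]
    rw [hL, hR, mul_one] at hray
    exact hray
  have habs : ∀ i, |hAh.eigenvalues i| ≤ lamG := by
    intro i
    set u : Fin n → ℝ := ⇑(hAh.eigenvectorBasis i) with hu
    have huvec : A *ᵥ u = hAh.eigenvalues i • u := hAh.mulVec_eigenvectorBasis i
    have hune : u ≠ 0 := by
      intro h
      exact hAh.eigenvectorBasis.toBasis.ne_zero i (by ext a; exact congrFun h a)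
    have hupos : 0 < u ⬝ᵥ u := dot_self_pos hune
    have e1 : |hAh.eigenvalues i| * (u ⬝ᵥ u) = |u ⬝ᵥ (A *ᵥ u)| := by
      rw [huvec, dotProduct_smul, smul_eq_mul, abs_mul, abs_of_pos hupos]
    have e2 : |u ⬝ᵥ (A *ᵥ u)| ≤ (fun a => |u a|) ⬝ᵥ (A *ᵥ fun a => |u a|) :=
      abs_dot_le A hA0 u
    have e3 : (fun a => |u a|) ⬝ᵥ (A *ᵥ fun a => |u a|) ≤
        lamG * ((fun a => |u a|) ⬝ᵥ fun a => |u a|) := by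
      have := rayleigh_pow_le hAh (fun a => |u a|) 1 (C := lamG)
        (fun j => by rw [pow_one]; exact hmaxG j)
      rwa [pow_one] at this
    have e4 : ((fun a => |u a|) ⬝ᵥ fun a => |u a|) = u ⬝ᵥ u := by
      simp only [dotProduct, abs_mul_abs_self]
    have : |hAh.eigenvalues i| * (u ⬝ᵥ u) ≤ lamG * (u ⬝ᵥ u) := by
      rw [e1]
      exact e2.trans (by rwa [e4] at e3)
    exact le_of_mul_le_mul_right (by linarith [this]) hupos
  have hCbound : ∀ i, hAh.eigenvalues i ^ (2 * r) ≤ lamG ^ (2 * r) := by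
    intro i
    have h2 : hAh.eigenvalues i ^ 2 ≤ lamG ^ 2 := by
      have := habs i
      have h' := abs_le.mp this
      nlinarith [h'.1, h'.2]
    rw [pow_mul, pow_mul]
    exact pow_le_pow_left₀ (sq_nonneg _) h2 r
  have h4 : x ⬝ᵥ ((A ^ (2 * r)) *ᵥ x) ≤ lamG ^ (2 * r) * (x ⬝ᵥ x) :=
    rayleigh_pow_le hAh x (2 * r) hCbound
  have hxx : x ⬝ᵥ x = t := by
    rw [dotProduct, sum_eq_sum_subtype W (fun a => x a * x a)
      (fun a ha => by simp [hxzero a ha])]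
    rw [ht, dotProduct]
    refine Finset.sum_congr rfl fun w _ => ?_
    simp only [hxcoe, abs_mul_abs_self]
  rw [hxx] at h4
  have hfinal : lamH ^ (2 * r) * t + t ≤ lamG ^ (2 * r) * t := by linarith
  have hmul : (lamH ^ (2 * r) + 1) * t ≤ lamG ^ (2 * r) * t := by
    rw [add_mul, one_mul]; exact hfinal
  have hdiv : lamH ^ (2 * r) + 1 ≤ lamG ^ (2 * r) := le_of_mul_le_mul_right hmul htpos
  linarith
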